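/- Let p, q, r, s be real numbers and n a nonnegative integer such that (2i+(−1)^{n+1}+2)q + s ≠ 0 for all 0 ≤ i ≤ ⌊n/2⌋−1. Then the polynomial Φ_n(x) = S_n(p,q,r,s; x) satisfies, for all real x, the differential equation x²(px²+q) Φ_n''(x) + x(rx²+s) Φ_n'(x) − (n(r+(n−1)p) x² + ((1−(−1)^n)/2) s) Φ_n(x) = 0. -/

import Mathlib

open Real Finset

noncomputable section

/-- The basic class of symmetric polynomials `S_n(p,q,r,s; x)`. -/
def S (p q r s : ℝ) (n : ℕ) (x : ℝ) : ℝ :=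
  ∑ k ∈ Finset.range (n / 2 + 1),
    ((n / 2).choose k : ℝ) *
      (∏ i ∈ Finset.range (n / 2 - k),
        ((2 * (i : ℝ) + (-1) ^ (n + 1) + 2 * ((n / 2 : ℕ) : ℝ)) * p + r) /
          ((2 * (i : ℝ) + (-1) ^ (n + 1) + 2) * q + s)) *
      x ^ (n - 2 * k)

/-- Numerator factor. -/
def Nm (p r : ℝ) (n i : ℕ) : ℝ :=
  (2 * (i : ℝ) + (-1) ^ (n + 1) + 2 * ((n / 2 : ℕ) : ℝ)) * p + r

/-- Denominator factor. -/
def Dm (q s : ℝ) (n i : ℕ) : ℝ :=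
  (2 * (i : ℝ) + (-1) ^ (n + 1) + 2) * q + s

/-- Coefficient of `x^(n-2k)` in `S`. -/
def Cc (p q r s : ℝ) (n k : ℕ) : ℝ :=
  ((n / 2).choose k : ℝ) * ∏ i ∈ Finset.range (n / 2 - k), Nm p r n i / Dm q s n i

def Am (p r : ℝ) (n k : ℕ) : ℝ :=
  p * ((n : ℝ) - 2 * k) * ((n : ℝ) - 2 * k - 1) + r * ((n : ℝ) - 2 * k)
    - (n : ℝ) * (r + ((n : ℝ) - 1) * p)

def Bm (q s : ℝ) (n k : ℕ) : ℝ :=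
  q * ((n : ℝ) - 2 * k) * ((n : ℝ) - 2 * k - 1) + s * ((n : ℝ) - 2 * k - ((n % 2 : ℕ) : ℝ))

lemma deriv_msum (c : ℕ → ℝ) (e : ℕ → ℕ) (t : Finset ℕ) :
    deriv (fun x : ℝ => ∑ k ∈ t, c k * x ^ (e k))
      = fun x => ∑ k ∈ t, (c k * ((e k : ℕ) : ℝ)) * x ^ (e k - 1) := by
  funext x
  rw [deriv_fun_sum]
  · exact Finset.sum_congr rfl fun k _ => by
      rw [deriv_const_mul _ (differentiableAt_pow _), deriv_pow_field]; ring
  · exact fun k _ => (differentiableAt_pow _).const_mul _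

theorem ode_S (p q r s : ℝ) (n : ℕ)
    (h : ∀ i : ℕ, i < n / 2 → (2 * (i : ℝ) + (-1) ^ (n + 1) + 2) * q + s ≠ 0) (x : ℝ) :
    x ^ 2 * (p * x ^ 2 + q) * iteratedDeriv 2 (S p q r s n) x
      + x * (r * x ^ 2 + s) * deriv (S p q r s n) x
      - ((n : ℝ) * (r + ((n : ℝ) - 1) * p) * x ^ 2 + (1 - (-1) ^ n) / 2 * s) * S p q r s n x
      = 0 := by
  have hε : n % 2 = 0 ∨ n % 2 = 1 := Nat.mod_two_eq_zero_or_one n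
  have hn2 : 2 * (n / 2) + n % 2 = n := Nat.div_add_mod n 2
  have hsign : ((-1 : ℝ)) ^ (n + 1) = 2 * ((n % 2 : ℕ) : ℝ) - 1 := by
    rcases hε with h0 | h1
    · have : Even n := Nat.even_iff.mpr h0
      rw [pow_succ, this.neg_one_pow, h0]; norm_num
    · have : Odd n := Nat.odd_iff.mpr h1
      rw [pow_succ, this.neg_one_pow, h1]; norm_num
  have hsig2 : ((1 : ℝ) - (-1) ^ n) / 2 = ((n % 2 : ℕ) : ℝ) := by
    rcases hε with h0 | h1
    · have : Even n := Nat.even_iff.mpr h0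
      rw [this.neg_one_pow, h0]; norm_num
    · have : Odd n := Nat.odd_iff.mpr h1
      rw [this.neg_one_pow, h1]; norm_num
  have hS : S p q r s n = fun x : ℝ =>
      ∑ k ∈ Finset.range (n / 2 + 1), Cc p q r s n k * x ^ (n - 2 * k) := rfl
  have hd1 : deriv (S p q r s n) = fun x : ℝ =>
      ∑ k ∈ Finset.range (n / 2 + 1),
        (Cc p q r s n k * ((n - 2 * k : ℕ) : ℝ)) * x ^ (n - 2 * k - 1) := by
    rw [hS, deriv_msum]
  have hd2 : iteratedDeriv 2 (S p q r s n) = fun x : ℝ =>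
      ∑ k ∈ Finset.range (n / 2 + 1),
        ((Cc p q r s n k * ((n - 2 * k : ℕ) : ℝ)) * ((n - 2 * k - 1 : ℕ) : ℝ))
          * x ^ (n - 2 * k - 1 - 1) := by
    rw [show (2 : ℕ) = 1 + 1 from rfl, iteratedDeriv_succ, iteratedDeriv_one, hd1, deriv_msum]
  rw [hd2, hd1, hS]
  rw [Finset.mul_sum, Finset.mul_sum, Finset.mul_sum, ← Finset.sum_add_distrib,
    ← Finset.sum_sub_distrib]
  have key : ∀ k ∈ Finset.range (n / 2 + 1),
      (x ^ 2 * (p * x ^ 2 + q) *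
          (Cc p q r s n k * ((n - 2 * k : ℕ) : ℝ) * ((n - 2 * k - 1 : ℕ) : ℝ)
            * x ^ (n - 2 * k - 1 - 1))
        + x * (r * x ^ 2 + s) *
          (Cc p q r s n k * ((n - 2 * k : ℕ) : ℝ) * x ^ (n - 2 * k - 1)))
        - ((n : ℝ) * (r + ((n : ℝ) - 1) * p) * x ^ 2 + (1 - (-1) ^ n) / 2 * s) *
          (Cc p q r s n k * x ^ (n - 2 * k))
      = Am p r n k * (Cc p q r s n k * x ^ (n - 2 * k + 2))
        + Bm q s n k * (Cc p q r s n k * x ^ (n - 2 * k)) := by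
    intro k hk
    rw [Finset.mem_range] at hk
    rw [hsig2]
    rcases Nat.lt_or_ge k (n / 2) with hkm | hkm
    · obtain ⟨j, hj⟩ : ∃ j, n - 2 * k = j + 2 := ⟨n - 2 * k - 2, by omega⟩
      have hE : ((n : ℝ) - 2 * k) = ((j : ℝ) + 2) := by
        have h2k : 2 * k + (j + 2) = n := by omega
        have := congrArg (fun t : ℕ => (t : ℝ)) h2k
        push_cast at this; linarith
      rw [hj]
      simp only [Am, Bm, hE]
      push_cast
      ring
    · have hkm' : k = n / 2 := by omega
      subst hkm'
      have he : n - 2 * (n / 2) = n % 2 := by omega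
      have hE : ((n : ℝ) - 2 * (n / 2 : ℕ)) = ((n % 2 : ℕ) : ℝ) := by
        have := congrArg (fun t : ℕ => (t : ℝ)) hn2
        push_cast at this; linarith
      rw [he]
      simp only [Am, Bm, hE]
      rcases hε with h0 | h1
      · rw [h0]; norm_num; ring
      · rw [h1]; norm_num; ring
  rw [Finset.sum_congr rfl key, Finset.sum_add_distrib,
    Finset.sum_range_succ' (fun k => Am p r n k * (Cc p q r s n k * x ^ (n - 2 * k + 2))) (n / 2),
    Finset.sum_range_succ (fun k => Bm q s n k * (Cc p q r s n k * x ^ (n - 2 * k)))]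
  have hA0 : Am p r n 0 = 0 := by simp only [Am]; push_cast; ring
  have hBm : Bm q s n (n / 2) = 0 := by
    have hE : ((n : ℝ) - 2 * (n / 2 : ℕ)) = ((n % 2 : ℕ) : ℝ) := by
      have := congrArg (fun t : ℕ => (t : ℝ)) hn2
      push_cast at this; linarith
    simp only [Bm, hE]
    rcases hε with h0 | h1
    · rw [h0]; norm_num
    · rw [h1]; norm_num
  rw [hA0, hBm, zero_mul, add_zero, zero_mul, add_zero, ← Finset.sum_add_distrib]
  apply Finset.sum_eq_zero
  intro k hk
  rw [Finset.mem_range] at hk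
  have hexp : n - 2 * (k + 1) + 2 = n - 2 * k := by omega
  rw [hexp]
  have main : Am p r n (k + 1) * Cc p q r s n (k + 1) + Bm q s n k * Cc p q r s n k = 0 := by
    set j := n / 2 - (k + 1) with hjdef
    have hmk : n / 2 - k = j + 1 := by omega
    have hcc : Cc p q r s n k
        = ((n / 2).choose k : ℝ) * ((∏ i ∈ Finset.range j, Nm p r n i / Dm q s n i)
            * (Nm p r n j / Dm q s n j)) := by
      rw [Cc, hmk, Finset.prod_range_succ]
    have hcc1 : Cc p q r s n (k + 1)
        = ((n / 2).choose (k + 1) : ℝ) * ∏ i ∈ Finset.range j, Nm p r n i / Dm q s n i := rfl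
    have hD : Dm q s n j ≠ 0 := h j (by omega)
    have hDN : Dm q s n j * (Nm p r n j / Dm q s n j) = Nm p r n j := by
      field_simp
    have hjR : ((j : ℝ)) = ((n / 2 : ℕ) : ℝ) - k - 1 := by
      have h2 : j + (k + 1) = n / 2 := by omega
      have := congrArg (fun t : ℕ => (t : ℝ)) h2
      push_cast at this; linarith
    have hnR : ((n : ℝ)) = 2 * ((n / 2 : ℕ) : ℝ) + ((n % 2 : ℕ) : ℝ) := by
      have := congrArg (fun t : ℕ => (t : ℝ)) hn2
      push_cast at this; linarith
    have hA : Am p r n (k + 1) = -(2 * (k : ℝ) + 2) * Nm p r n j := by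
      simp only [Am, Nm, hsign]
      push_cast
      rw [hjR, hnR]
      ring
    have hε2 : (((n % 2 : ℕ) : ℝ)) ^ 2 = ((n % 2 : ℕ) : ℝ) := by
      rcases hε with h0 | h1
      · rw [h0]; norm_num
      · rw [h1]; norm_num
    have hB : Bm q s n k = (2 * (j : ℝ) + 2) * Dm q s n j := by
      simp only [Bm, Dm, hsign]
      rw [hjR, hnR]
      linear_combination q * hε2
    have hch : (((n / 2).choose (k + 1) : ℕ) : ℝ) * ((k : ℝ) + 1)
        = (((n / 2).choose k : ℕ) : ℝ) * ((j : ℝ) + 1) := by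
      have := (n / 2).choose_succ_right_eq k
      rw [hmk] at this
      have h2 : n / 2 - k = j + 1 := hmk
      exact_mod_cast congrArg (fun t : ℕ => (t : ℝ)) this
    rw [hA, hB, hcc, hcc1]
    linear_combination
      (2 * (j : ℝ) + 2) * (((n / 2).choose k : ℕ) : ℝ)
          * (∏ i ∈ Finset.range j, Nm p r n i / Dm q s n i) * hDN
        - 2 * (∏ i ∈ Finset.range j, Nm p r n i / Dm q s n i) * (Nm p r n j) * hch
  linear_combination (x ^ (n - 2 * k)) * main
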